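/- The linear map f̂ is an algebra automorphism of Ĥ, i.e. f̂ is a bijective linear map satisfying f̂(x·y) = f̂(x)·f̂(y) for all x, y ∈ Ĥ. -/

import Mathlib

namespace HatAlgebra

/-- Basis of the algebra `Ĥ`: vectors `â i` for `i : ℤ`, `ŝ_{0̄,j}` for `j` a positive
integer, and `ŝ_{1̄,3k}`, `ŝ_{2̄,3k}` for `k` a positive integer. -/
inductive HatB : Type
  | a : ℤ → HatB
  | s0 : ℕ+ → HatB
  | s1 : ℕ+ → HatB
  | s2 : ℕ+ → HatB
  deriving DecidableEq

variable (F : Type*) [Field F]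

/-- The underlying vector space of `Ĥ`: the free `F`-vector space on `HatB`. -/
abbrev HatH : Type _ := HatB →₀ F

/-- The basis vector `â i`. -/
noncomputable def aHat (i : ℤ) : HatH F := Finsupp.single (HatB.a i) 1

/-- The element `ŝ_{r̄,j}` of `Ĥ`, with the conventions `ŝ_{r̄,0} = 0` and
`ŝ_{1̄,j} = ŝ_{0̄,j} = ŝ_{2̄,j}` whenever `3 ∤ j`. -/
noncomputable def sHat (r : ZMod 3) (j : ℕ) : HatH F :=
  if h : j = 0 then 0
  else if h3 : 3 ∣ j then
    if r = 0 then Finsupp.single (HatB.s0 ⟨j, Nat.pos_of_ne_zero h⟩) 1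
    else if r = 1 then
      Finsupp.single (HatB.s1 ⟨j / 3,
        Nat.div_pos (Nat.le_of_dvd (Nat.pos_of_ne_zero h) h3) (by norm_num)⟩) 1
    else
      Finsupp.single (HatB.s2 ⟨j / 3,
        Nat.div_pos (Nat.le_of_dvd (Nat.pos_of_ne_zero h) h3) (by norm_num)⟩) 1
  else Finsupp.single (HatB.s0 ⟨j, Nat.pos_of_ne_zero h⟩) 1

/-- The operation `∗`: `(−1) ∗ 1̄ = −1`, `(−1) ∗ 2̄ = 1`, `0 ∗ t̄ = 0`. -/
def hatStar (x : ℤ) (t : ZMod 3) : ℤ :=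
  if x = 0 then 0 else if t = 1 then -1 else if t = 2 then 1 else 0

/-- The coefficient `(δ_{ī,r̄} − 1) ∗ (ī − r̄)` appearing in rule (Ĥ2). -/
def hatC (i r : ZMod 3) : ℤ := hatStar ((if i = r then 1 else 0) - 1) (i - r)

/-- Rule (Ĥ2): the product `â_i · ŝ_{r̄,j}`. -/
noncomputable def aMulS (i : ℤ) (r : ZMod 3) (j : ℕ) : HatH F :=
  (-2 : F) • aHat F i + (aHat F (i - (j : ℤ)) + aHat F (i + (j : ℤ))) - sHat F r j
    - (hatC (i : ZMod 3) r : F) • (sHat F (r - 1) j - sHat F (r + 1) j)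

/-- `ŝ_{0̄,n} + ŝ_{1̄,n} + ŝ_{2̄,n}`. -/
noncomputable def sSum (n : ℕ) : HatH F := sHat F 0 n + sHat F 1 n + sHat F 2 n

/-- For `r ≠ t` in `ℤ/3ℤ`, the signed sum `ŝ_{r̄,n} + ŝ_{t̄,n} − ŝ_{m̄,n}` where `m̄`
is the third residue class (appearing in rules (Ĥ5), (Ĥ6), (Ĥ7)). -/
noncomputable def sT (r t : ZMod 3) (n : ℕ) : HatH F :=
  sHat F r n + sHat F t n - sHat F (-(r + t)) n

/-- Rules (Ĥ3)–(Ĥ7): the product `ŝ_{r̄,i} · ŝ_{t̄,j}`. -/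
noncomputable def sMulS (r : ZMod 3) (i : ℕ) (t : ZMod 3) (j : ℕ) : HatH F :=
  if 3 ∣ i ∧ 3 ∣ j then
    if r = t then
      (2 : F) • (sHat F r i + sHat F r j) - (sHat F r (Nat.dist i j) + sHat F r (i + j))
    else
      (2 : F) • (sT F r t i + sT F r t j) - (sT F r t (Nat.dist i j) + sT F r t (i + j))
  else
    (2 : F) • (sHat F r i + sHat F t j) - (2 : F) • (sSum F (Nat.dist i j) + sSum F (i + j))

/-- The product of `Ĥ` on basis vectors, given by rules (Ĥ1)–(Ĥ7) (extended
symmetrically, since the product is commutative). -/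
noncomputable def mulB : HatB → HatB → HatH F
  | .a i, .a j => (-2 : F) • (aHat F i + aHat F j) + sHat F (i : ZMod 3) (i - j).natAbs
  | .a i, .s0 j => aMulS F i 0 (j : ℕ)
  | .s0 j, .a i => aMulS F i 0 (j : ℕ)
  | .a i, .s1 k => aMulS F i 1 (3 * (k : ℕ))
  | .s1 k, .a i => aMulS F i 1 (3 * (k : ℕ))
  | .a i, .s2 k => aMulS F i 2 (3 * (k : ℕ))
  | .s2 k, .a i => aMulS F i 2 (3 * (k : ℕ))
  | .s0 i, .s0 j => sMulS F 0 (i : ℕ) 0 (j : ℕ)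
  | .s0 i, .s1 k => sMulS F 0 (i : ℕ) 1 (3 * (k : ℕ))
  | .s1 k, .s0 i => sMulS F 0 (i : ℕ) 1 (3 * (k : ℕ))
  | .s0 i, .s2 k => sMulS F 0 (i : ℕ) 2 (3 * (k : ℕ))
  | .s2 k, .s0 i => sMulS F 0 (i : ℕ) 2 (3 * (k : ℕ))
  | .s1 h, .s1 k => sMulS F 1 (3 * (h : ℕ)) 1 (3 * (k : ℕ))
  | .s1 h, .s2 k => sMulS F 1 (3 * (h : ℕ)) 2 (3 * (k : ℕ))
  | .s2 k, .s1 h => sMulS F 1 (3 * (h : ℕ)) 2 (3 * (k : ℕ))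
  | .s2 h, .s2 k => sMulS F 2 (3 * (h : ℕ)) 2 (3 * (k : ℕ))

/-- The commutative bilinear product of `Ĥ`, as a bilinear map. -/
noncomputable def hatMul : HatH F →ₗ[F] HatH F →ₗ[F] HatH F :=
  Finsupp.lift (HatH F →ₗ[F] HatH F) F HatB fun x => Finsupp.lift (HatH F) F HatB (mulB F x)

/-- The product of two elements of `Ĥ`. -/
noncomputable def hmul (x y : HatH F) : HatH F := hatMul F x y


/-- The linear map `f̂`, determined on basis vectors by `â_i ↦ â_{−i+1}`,
`ŝ_{0̄,j} ↦ ŝ_{0̄,j}` for `3 ∤ j`, `ŝ_{0̄,3k} ↦ ŝ_{1̄,3k}`, `ŝ_{1̄,3k} ↦ ŝ_{0̄,3k}`,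
`ŝ_{2̄,3k} ↦ ŝ_{2̄,3k}`. -/
noncomputable def fHatB : HatB → HatH F
  | .a i => aHat F (-i + 1)
  | .s0 j => sHat F 1 (j : ℕ)
  | .s1 k => sHat F 0 (3 * (k : ℕ))
  | .s2 k => sHat F 2 (3 * (k : ℕ))

noncomputable def fHat : HatH F →ₗ[F] HatH F := Finsupp.lift (HatH F) F HatB (fHatB F)


section Lemmas
variable {F}

lemma zmod3_cases : ∀ r : ZMod 3, r = 0 ∨ r = 1 ∨ r = 2 := by decide

lemma sHat_zero (r : ZMod 3) : sHat F r 0 = 0 := by simp [sHat]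

lemma sHat_not_dvd {j : ℕ} (h3 : ¬ 3 ∣ j) (r : ZMod 3) :
    sHat F r j = Finsupp.single (HatB.s0 ⟨j, Nat.pos_of_ne_zero (by rintro rfl; exact h3 ⟨0, rfl⟩)⟩) 1 := by
  have hj : j ≠ 0 := by rintro rfl; exact h3 ⟨0, rfl⟩
  simp [sHat, hj, h3]

lemma sHat_s0 {j : ℕ} (h3 : 3 ∣ j) (hj : j ≠ 0) :
    sHat F 0 j = Finsupp.single (HatB.s0 ⟨j, Nat.pos_of_ne_zero hj⟩) 1 := by
  simp [sHat, hj, h3]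

lemma sHat_s1 {k : ℕ} (hk : k ≠ 0) :
    sHat F 1 (3 * k) = Finsupp.single (HatB.s1 ⟨k, Nat.pos_of_ne_zero hk⟩) 1 := by
  have h1 : 3 * k ≠ 0 := by omega
  have h3 : 3 ∣ 3 * k := ⟨k, rfl⟩
  have e : 3 * k / 3 = k := by omega
  simp [sHat, h1, h3, e, (by decide : (1 : ZMod 3) ≠ 0)]

lemma sHat_s2 {k : ℕ} (hk : k ≠ 0) :
    sHat F 2 (3 * k) = Finsupp.single (HatB.s2 ⟨k, Nat.pos_of_ne_zero hk⟩) 1 := by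
  have h1 : 3 * k ≠ 0 := by omega
  have h3 : 3 ∣ 3 * k := ⟨k, rfl⟩
  have e : 3 * k / 3 = k := by omega
  simp [sHat, h1, h3, e, (by decide : (2 : ZMod 3) ≠ 0), (by decide : (2 : ZMod 3) ≠ 1)]

lemma sHat_congr {j : ℕ} (h3 : ¬ 3 ∣ j) (r t : ZMod 3) : sHat F r j = sHat F t j := by
  rw [sHat_not_dvd h3, sHat_not_dvd h3]

lemma fHat_single (b : HatB) : fHat F (Finsupp.single b 1) = fHatB F b := by
  simp [fHat, Finsupp.lift_apply, Finsupp.sum_single_index]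

lemma fHat_aHat (i : ℤ) : fHat F (aHat F i) = aHat F (-i + 1) := by
  rw [aHat, fHat_single]; rfl

lemma hmul_single (b c : HatB) :
    hmul F (Finsupp.single b 1) (Finsupp.single c 1) = mulB F b c := by
  simp [hmul, hatMul, Finsupp.lift_apply, Finsupp.sum_single_index]

lemma hmul_zero_left (y : HatH F) : hmul F 0 y = 0 := by simp [hmul]
lemma hmul_zero_right (x : HatH F) : hmul F x 0 = 0 := by simp [hmul]
lemma hmul_add_left (x x' y : HatH F) : hmul F (x + x') y = hmul F x y + hmul F x' y := by
  simp [hmul]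
lemma hmul_add_right (x y y' : HatH F) : hmul F x (y + y') = hmul F x y + hmul F x y' := by
  simp [hmul]
lemma hmul_smul_left (c : F) (x y : HatH F) : hmul F (c • x) y = c • hmul F x y := by
  simp [hmul]
lemma hmul_smul_right (c : F) (x y : HatH F) : hmul F x (c • y) = c • hmul F x y := by
  simp [hmul]


lemma fHat_sHat (r : ZMod 3) (j : ℕ) : fHat F (sHat F r j) = sHat F (1 - r) j := by
  by_cases hj : j = 0
  · subst hj; rw [sHat_zero, sHat_zero, map_zero]
  by_cases h3 : 3 ∣ j
  · obtain ⟨k, rfl⟩ := h3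
    have hk : k ≠ 0 := by omega
    rcases zmod3_cases r with rfl | rfl | rfl
    · rw [sHat_s0 ⟨k, rfl⟩ hj, fHat_single, sub_zero]
      show sHat F 1 ((⟨3 * k, _⟩ : ℕ+) : ℕ) = _
      rfl
    · rw [sHat_s1 hk, fHat_single, sub_self]
      show sHat F 0 (3 * ((⟨k, _⟩ : ℕ+) : ℕ)) = _
      rfl
    · rw [sHat_s2 hk, fHat_single, (by decide : (1 : ZMod 3) - 2 = 2)]
      show sHat F 2 (3 * ((⟨k, _⟩ : ℕ+) : ℕ)) = _
      rfl
  · rw [sHat_not_dvd h3, fHat_single]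
    show sHat F 1 ((⟨j, _⟩ : ℕ+) : ℕ) = _
    exact sHat_congr h3 1 (1 - r)

lemma fHat_sSum (n : ℕ) : fHat F (sSum F n) = sSum F n := by
  simp only [sSum]
  simp only [map_add, fHat_sHat, sub_zero, sub_self, (by decide : (1 : ZMod 3) - 2 = 2)]
  abel

lemma zmod3_aux : ∀ r t : ZMod 3, (1 : ZMod 3) - (-(r + t)) = -((1 - r) + (1 - t)) := by decide

lemma fHat_sT (r t : ZMod 3) (n : ℕ) : fHat F (sT F r t n) = sT F (1 - r) (1 - t) n := by
  rw [sT, sT]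
  simp only [map_add, map_sub, fHat_sHat, zmod3_aux]

lemma hatC_flip : ∀ i r : ZMod 3, hatC (-i + 1) (1 - r) = - hatC i r := by decide


lemma fHat_aMulS (i : ℤ) (r : ZMod 3) (j : ℕ) :
    fHat F (aMulS F i r j) = aMulS F (-i + 1) (1 - r) j := by
  have e1 : -(i - (j : ℤ)) + 1 = (-i + 1) + (j : ℤ) := by ring
  have e2 : -(i + (j : ℤ)) + 1 = (-i + 1) - (j : ℤ) := by ring
  have e3 : (1 : ZMod 3) - (r - 1) = (1 - r) + 1 := by ring
  have e4 : (1 : ZMod 3) - (r + 1) = (1 - r) - 1 := by ring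
  have e5 : hatC ((-i + 1 : ℤ) : ZMod 3) (1 - r) = - hatC (i : ZMod 3) r := by
    push_cast
    exact hatC_flip _ _
  rw [aMulS, aMulS]
  simp only [map_add, map_sub, map_smul, fHat_aHat, fHat_sHat, e1, e2, e3, e4, e5]
  push_cast
  module

lemma aMulS_not_dvd {j : ℕ} (h3 : ¬ 3 ∣ j) (i : ℤ) (r : ZMod 3) :
    aMulS F i r j = aMulS F i 0 j := by
  rw [aMulS, aMulS, sHat_congr h3 r 0, sHat_congr h3 (r - 1) 0, sHat_congr h3 (r + 1) 0,
    sHat_congr h3 (0 - 1) 0, sHat_congr h3 (0 + 1) 0]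
  simp

lemma hmul_aHat_sHat (i : ℤ) (r : ZMod 3) (j : ℕ) :
    hmul F (aHat F i) (sHat F r j) = aMulS F i r j := by
  by_cases hj : j = 0
  · subst hj
    rw [sHat_zero, hmul_zero_right, aMulS]
    simp only [sHat_zero, Nat.cast_zero, sub_zero, add_zero, sub_self, smul_zero]
    module
  by_cases h3 : 3 ∣ j
  · obtain ⟨k, rfl⟩ := h3
    have hk : k ≠ 0 := by omega
    rcases zmod3_cases r with rfl | rfl | rfl
    · rw [sHat_s0 ⟨k, rfl⟩ hj, aHat, hmul_single]; rfl
    · rw [sHat_s1 hk, aHat, hmul_single]; rfl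
    · rw [sHat_s2 hk, aHat, hmul_single]; rfl
  · rw [sHat_not_dvd h3, aHat, hmul_single, aMulS_not_dvd h3]; rfl

lemma hmul_sHat_aHat (i : ℤ) (r : ZMod 3) (j : ℕ) :
    hmul F (sHat F r j) (aHat F i) = aMulS F i r j := by
  by_cases hj : j = 0
  · subst hj
    rw [sHat_zero, hmul_zero_left, aMulS]
    simp only [sHat_zero, Nat.cast_zero, sub_zero, add_zero, sub_self, smul_zero]
    module
  by_cases h3 : 3 ∣ j
  · obtain ⟨k, rfl⟩ := h3
    have hk : k ≠ 0 := by omega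
    rcases zmod3_cases r with rfl | rfl | rfl
    · rw [sHat_s0 ⟨k, rfl⟩ hj, aHat, hmul_single]; rfl
    · rw [sHat_s1 hk, aHat, hmul_single]; rfl
    · rw [sHat_s2 hk, aHat, hmul_single]; rfl
  · rw [sHat_not_dvd h3, aHat, hmul_single, aMulS_not_dvd h3]; rfl


lemma sT_comm (r t : ZMod 3) (n : ℕ) : sT F r t n = sT F t r n := by
  simp only [sT]
  rw [add_comm r t]
  abel

lemma sMulS_comm (r t : ZMod 3) (i j : ℕ) : sMulS F r i t j = sMulS F t j r i := by
  rw [sMulS, sMulS]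
  by_cases hd : 3 ∣ i ∧ 3 ∣ j
  · have hd' : 3 ∣ j ∧ 3 ∣ i := ⟨hd.2, hd.1⟩
    rw [if_pos hd, if_pos hd']
    by_cases hrt : r = t
    · subst hrt
      rw [if_pos rfl, if_pos rfl, Nat.dist_comm j i, Nat.add_comm j i]
      abel
    · rw [if_neg hrt, if_neg (Ne.symm hrt)]
      simp only [sT_comm t r, Nat.dist_comm j i, Nat.add_comm j i]
      abel
  · have hd' : ¬ (3 ∣ j ∧ 3 ∣ i) := by tauto
    rw [if_neg hd, if_neg hd', Nat.dist_comm j i, Nat.add_comm j i]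
    abel

lemma sMulS_congr_left {i : ℕ} (h3 : ¬ 3 ∣ i) (r t : ZMod 3) (j : ℕ) :
    sMulS F r i t j = sMulS F 0 i t j := by
  rw [sMulS, sMulS, if_neg (by tauto), if_neg (by tauto), sHat_congr h3 r 0]

lemma sMulS_congr_right {j : ℕ} (h3 : ¬ 3 ∣ j) (r t : ZMod 3) (i : ℕ) :
    sMulS F r i t j = sMulS F r i 0 j := by
  rw [sMulS_comm, sMulS_congr_left h3, sMulS_comm]

lemma hmul_sHat_sHat (r t : ZMod 3) {i j : ℕ} (hi : i ≠ 0) (hj : j ≠ 0) :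
    hmul F (sHat F r i) (sHat F t j) = sMulS F r i t j := by
  by_cases h3i : 3 ∣ i
  · obtain ⟨h, rfl⟩ := h3i
    have hh : h ≠ 0 := by omega
    by_cases h3j : 3 ∣ j
    · obtain ⟨k, rfl⟩ := h3j
      have hk : k ≠ 0 := by omega
      rcases zmod3_cases r with rfl | rfl | rfl <;> rcases zmod3_cases t with rfl | rfl | rfl
      · rw [sHat_s0 ⟨h, rfl⟩ hi, sHat_s0 ⟨k, rfl⟩ hj, hmul_single]; rfl
      · rw [sHat_s0 ⟨h, rfl⟩ hi, sHat_s1 hk, hmul_single]; rfl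
      · rw [sHat_s0 ⟨h, rfl⟩ hi, sHat_s2 hk, hmul_single]; rfl
      · rw [sHat_s1 hh, sHat_s0 ⟨k, rfl⟩ hj, hmul_single, sMulS_comm]; rfl
      · rw [sHat_s1 hh, sHat_s1 hk, hmul_single]; rfl
      · rw [sHat_s1 hh, sHat_s2 hk, hmul_single]; rfl
      · rw [sHat_s2 hh, sHat_s0 ⟨k, rfl⟩ hj, hmul_single, sMulS_comm]; rfl
      · rw [sHat_s2 hh, sHat_s1 hk, hmul_single, sMulS_comm]; rfl
      · rw [sHat_s2 hh, sHat_s2 hk, hmul_single]; rfl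
    · rw [sHat_not_dvd h3j, sMulS_congr_right h3j]
      rcases zmod3_cases r with rfl | rfl | rfl
      · rw [sHat_s0 ⟨h, rfl⟩ hi, hmul_single]; rfl
      · rw [sHat_s1 hh, hmul_single, sMulS_comm]; rfl
      · rw [sHat_s2 hh, hmul_single, sMulS_comm]; rfl
  · rw [sHat_not_dvd h3i, sMulS_congr_left h3i]
    by_cases h3j : 3 ∣ j
    · obtain ⟨k, rfl⟩ := h3j
      have hk : k ≠ 0 := by omega
      rcases zmod3_cases t with rfl | rfl | rfl
      · rw [sHat_s0 ⟨k, rfl⟩ hj, hmul_single]; rfl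
      · rw [sHat_s1 hk, hmul_single]; rfl
      · rw [sHat_s2 hk, hmul_single]; rfl
    · rw [sHat_not_dvd h3j, sMulS_congr_right h3j, hmul_single]; rfl


lemma fHat_sMulS (r t : ZMod 3) (i j : ℕ) :
    fHat F (sMulS F r i t j) = sMulS F (1 - r) i (1 - t) j := by
  rw [sMulS, sMulS]
  by_cases hd : 3 ∣ i ∧ 3 ∣ j
  · rw [if_pos hd, if_pos hd]
    by_cases hrt : r = t
    · have hrt' : (1 : ZMod 3) - r = 1 - t := by rw [hrt]
      rw [if_pos hrt, if_pos hrt']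
      simp only [map_add, map_sub, map_smul, fHat_sHat]
    · have hrt' : ¬ (1 : ZMod 3) - r = 1 - t := fun h => hrt (by rwa [sub_right_inj] at h)
      rw [if_neg hrt, if_neg hrt']
      simp only [map_add, map_sub, map_smul, fHat_sT]
  · rw [if_neg hd, if_neg hd]
    simp only [map_add, map_sub, map_smul, fHat_sHat, fHat_sSum]

lemma fHat_fHatB (b : HatB) : fHat F (fHatB F b) = Finsupp.single b 1 := by
  cases b with
  | a i =>
      show fHat F (aHat F (-i + 1)) = _
      rw [fHat_aHat, show -(-i + 1) + 1 = i by ring]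
      rfl
  | s0 j =>
      show fHat F (sHat F 1 (j : ℕ)) = _
      rw [fHat_sHat, sub_self]
      have hj : (j : ℕ) ≠ 0 := j.ne_zero
      by_cases h3 : 3 ∣ (j : ℕ)
      · rw [sHat_s0 h3 hj]
        congr 1
      · rw [sHat_not_dvd h3]
        congr 1
  | s1 k =>
      show fHat F (sHat F 0 (3 * (k : ℕ))) = _
      rw [fHat_sHat, sub_zero, sHat_s1 k.ne_zero]
      congr 1
  | s2 k =>
      show fHat F (sHat F 2 (3 * (k : ℕ))) = _
      rw [fHat_sHat, (by decide : (1 : ZMod 3) - 2 = 2), sHat_s2 k.ne_zero]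
      congr 1

lemma hmul_aHat_aHat (i j : ℤ) :
    hmul F (aHat F i) (aHat F j)
      = (-2 : F) • (aHat F i + aHat F j) + sHat F (i : ZMod 3) (i - j).natAbs := by
  rw [aHat, aHat, hmul_single]; rfl

lemma key (b c : HatB) : fHat F (mulB F b c) = hmul F (fHatB F b) (fHatB F c) := by
  have h12 : (1 : ZMod 3) - 2 = 2 := by decide
  cases b with
  | a i =>
      cases c with
      | a j =>
          show fHat F ((-2 : F) • (aHat F i + aHat F j) + sHat F (i : ZMod 3) (i - j).natAbs)
            = hmul F (aHat F (-i + 1)) (aHat F (-j + 1))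
          rw [hmul_aHat_aHat]
          simp only [map_add, map_smul, fHat_aHat, fHat_sHat]
          have hres : ((-i + 1 : ℤ) : ZMod 3) = 1 - (i : ZMod 3) := by push_cast; ring
          have hnat : (-i + 1 - (-j + 1)).natAbs = (i - j).natAbs := by
            rw [show -i + 1 - (-j + 1) = -(i - j) by ring, Int.natAbs_neg]
          rw [hres, hnat]
      | s0 j =>
          show fHat F (aMulS F i 0 (j : ℕ)) = hmul F (aHat F (-i + 1)) (sHat F 1 (j : ℕ))
          rw [fHat_aMulS, hmul_aHat_sHat, sub_zero]
      | s1 k =>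
          show fHat F (aMulS F i 1 (3 * (k : ℕ)))
            = hmul F (aHat F (-i + 1)) (sHat F 0 (3 * (k : ℕ)))
          rw [fHat_aMulS, hmul_aHat_sHat, sub_self]
      | s2 k =>
          show fHat F (aMulS F i 2 (3 * (k : ℕ)))
            = hmul F (aHat F (-i + 1)) (sHat F 2 (3 * (k : ℕ)))
          rw [fHat_aMulS, hmul_aHat_sHat, h12]
  | s0 j =>
      cases c with
      | a i =>
          show fHat F (aMulS F i 0 (j : ℕ)) = hmul F (sHat F 1 (j : ℕ)) (aHat F (-i + 1))
          rw [fHat_aMulS, hmul_sHat_aHat, sub_zero]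
      | s0 j' =>
          show fHat F (sMulS F 0 (j : ℕ) 0 (j' : ℕ))
            = hmul F (sHat F 1 (j : ℕ)) (sHat F 1 (j' : ℕ))
          rw [fHat_sMulS, hmul_sHat_sHat 1 1 j.ne_zero j'.ne_zero, sub_zero]
      | s1 k =>
          show fHat F (sMulS F 0 (j : ℕ) 1 (3 * (k : ℕ)))
            = hmul F (sHat F 1 (j : ℕ)) (sHat F 0 (3 * (k : ℕ)))
          rw [fHat_sMulS, hmul_sHat_sHat 1 0 j.ne_zero (by simpa using k.ne_zero), sub_zero,
            sub_self]
      | s2 k =>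
          show fHat F (sMulS F 0 (j : ℕ) 2 (3 * (k : ℕ)))
            = hmul F (sHat F 1 (j : ℕ)) (sHat F 2 (3 * (k : ℕ)))
          rw [fHat_sMulS, hmul_sHat_sHat 1 2 j.ne_zero (by simpa using k.ne_zero), sub_zero, h12]
  | s1 k =>
      cases c with
      | a i =>
          show fHat F (aMulS F i 1 (3 * (k : ℕ)))
            = hmul F (sHat F 0 (3 * (k : ℕ))) (aHat F (-i + 1))
          rw [fHat_aMulS, hmul_sHat_aHat, sub_self]
      | s0 j =>
          show fHat F (sMulS F 0 (j : ℕ) 1 (3 * (k : ℕ)))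
            = hmul F (sHat F 0 (3 * (k : ℕ))) (sHat F 1 (j : ℕ))
          rw [fHat_sMulS, hmul_sHat_sHat 0 1 (by simpa using k.ne_zero) j.ne_zero, sub_zero,
            sub_self, sMulS_comm]
      | s1 k' =>
          show fHat F (sMulS F 1 (3 * (k : ℕ)) 1 (3 * (k' : ℕ)))
            = hmul F (sHat F 0 (3 * (k : ℕ))) (sHat F 0 (3 * (k' : ℕ)))
          rw [fHat_sMulS, hmul_sHat_sHat 0 0 (by simpa using k.ne_zero)
            (by simpa using k'.ne_zero), sub_self]
      | s2 k' =>
          show fHat F (sMulS F 1 (3 * (k : ℕ)) 2 (3 * (k' : ℕ)))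
            = hmul F (sHat F 0 (3 * (k : ℕ))) (sHat F 2 (3 * (k' : ℕ)))
          rw [fHat_sMulS, hmul_sHat_sHat 0 2 (by simpa using k.ne_zero)
            (by simpa using k'.ne_zero), sub_self, h12]
  | s2 k =>
      cases c with
      | a i =>
          show fHat F (aMulS F i 2 (3 * (k : ℕ)))
            = hmul F (sHat F 2 (3 * (k : ℕ))) (aHat F (-i + 1))
          rw [fHat_aMulS, hmul_sHat_aHat, h12]
      | s0 j =>
          show fHat F (sMulS F 0 (j : ℕ) 2 (3 * (k : ℕ)))
            = hmul F (sHat F 2 (3 * (k : ℕ))) (sHat F 1 (j : ℕ))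
          rw [fHat_sMulS, hmul_sHat_sHat 2 1 (by simpa using k.ne_zero) j.ne_zero, sub_zero, h12,
            sMulS_comm]
      | s1 k' =>
          show fHat F (sMulS F 1 (3 * (k' : ℕ)) 2 (3 * (k : ℕ)))
            = hmul F (sHat F 2 (3 * (k : ℕ))) (sHat F 0 (3 * (k' : ℕ)))
          rw [fHat_sMulS, hmul_sHat_sHat 2 0 (by simpa using k.ne_zero)
            (by simpa using k'.ne_zero), sub_self, h12, sMulS_comm]
      | s2 k' =>
          show fHat F (sMulS F 2 (3 * (k : ℕ)) 2 (3 * (k' : ℕ)))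
            = hmul F (sHat F 2 (3 * (k : ℕ))) (sHat F 2 (3 * (k' : ℕ)))
          rw [fHat_sMulS, hmul_sHat_sHat 2 2 (by simpa using k.ne_zero)
            (by simpa using k'.ne_zero), h12]

end Lemmas





/-- The linear map `f̂` is an algebra automorphism of `Ĥ`. -/
theorem fHat_automorphism [CharP F 5] :
    Function.Bijective (fHat F) ∧
      ∀ x y : HatH F, fHat F (hmul F x y) = hmul F (fHat F x) (fHat F y) := by
  have hinv : Function.Involutive (fHat F) := by
    intro x
    induction x using Finsupp.induction_linear with
    | zero => simp
    | add u v hu hv => rw [map_add, map_add, hu, hv]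
    | single b a =>
        rw [show (Finsupp.single b a : HatH F) = a • Finsupp.single b 1 by
            rw [Finsupp.smul_single, smul_eq_mul, mul_one],
          map_smul, map_smul, fHat_single, fHat_fHatB]
  refine ⟨hinv.bijective, ?_⟩
  intro x y
  induction x using Finsupp.induction_linear with
  | zero => simp [hmul_zero_left]
  | add u v hu hv => simp [hmul_add_left, map_add, hu, hv]
  | single b a =>
      induction y using Finsupp.induction_linear with
      | zero => simp [hmul_zero_right]
      | add u v hu hv => simp [hmul_add_right, map_add, hu, hv]
      | single c a' =>
          rw [show (Finsupp.single b a : HatH F) = a • Finsupp.single b 1 by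
              rw [Finsupp.smul_single, smul_eq_mul, mul_one],
            show (Finsupp.single c a' : HatH F) = a' • Finsupp.single c 1 by
              rw [Finsupp.smul_single, smul_eq_mul, mul_one],
            hmul_smul_left, hmul_smul_right, map_smul, map_smul, map_smul, map_smul,
            hmul_smul_left, hmul_smul_right, fHat_single, fHat_single, hmul_single, key]

end HatAlgebra
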